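/- Σ_{x ∈ 𝔽_q^{2n}} ψ(Q_n(x)) = χ(−2)·qⁿ·G(ψ). (Equivalently, the normalized Gauss sum of the form 𝐪 attached to a ramified even special orthogonal group equals χ(−2)·𝔫_ψ.) -/

import Mathlib

open Finset

/-- Extract the `k`-th coordinate (with 1-based subscripts `1 ≤ k ≤ N`) of a
vector `x ∈ K^N`, returning `0` for out-of-range subscripts. -/
def coordFn {K : Type*} [Zero K] (N : ℕ) (x : Fin N → K) (k : ℕ) : K :=
  if hk : 1 ≤ k ∧ k ≤ N then x ⟨k - 1, by omega⟩ else 0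

/-- The symmetric bilinear form `h_n` on `K^{2n}` attached to the affine generic
stratum of a ramified even special orthogonal group `SO_{2n}`. -/
def hSO {K : Type*} [Field K] (n : ℕ) (x y : Fin (2 * n) → K) : K :=
  let X := coordFn (2 * n) x
  let Y := coordFn (2 * n) y
  (2 : K)⁻¹ *
    ((X n - X (2 * n)) * Y 1 + (X 1 - X n) * Y n
      + (X (n + 2) - X (n + 1)) * Y (n + 1) + (X (n + 1) - X (n - 1)) * Y (n + 2)
      + ∑ i ∈ Finset.Icc 2 (n - 1), (X (2 * n + 2 - i) - X (2 * n + 1 - i)) * Y i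
      + ∑ i ∈ Finset.Icc (n + 3) (2 * n), (X (2 * n + 2 - i) - X (2 * n + 1 - i)) * Y i)


lemma addChar_map_sum {A M : Type*} [AddCommMonoid A] [CommMonoid M] (ψ : AddChar A M)
    {ι : Type*} (s : Finset ι) (f : ι → A) :
    ψ (∑ i ∈ s, f i) = ∏ i ∈ s, ψ (f i) := by
  classical
  induction s using Finset.cons_induction with
  | empty => simp
  | cons a s ha ih => rw [Finset.sum_cons, Finset.prod_cons, AddChar.map_add_eq_mul, ih]

lemma quadChar_inv {F : Type*} [Field F] [Fintype F] [DecidableEq F] (a : F) (ha : a ≠ 0) :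
    quadraticChar F a⁻¹ = quadraticChar F a := by
  have h1 : quadraticChar F a⁻¹ * quadraticChar F a = 1 := by
    rw [← map_mul, inv_mul_cancel₀ ha, map_one]
  have h2 := quadraticChar_sq_one (F := F) ha
  calc quadraticChar F a⁻¹ = quadraticChar F a⁻¹ * (quadraticChar F a ^ 2) := by rw [h2, mul_one]
    _ = (quadraticChar F a⁻¹ * quadraticChar F a) * quadraticChar F a := by ring
    _ = quadraticChar F a := by rw [h1, one_mul]

/-- `∑ t, ψ (a t²) = χ(a) ∑ t, ψ (t²)` for `a ≠ 0`. -/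
lemma sum_psi_mul_sq {F : Type*} [Field F] [Fintype F] [DecidableEq F]
    (hodd : Odd (Fintype.card F)) (ψ : AddChar F ℂ) (hψ : ψ ≠ 1) (a : F) (ha : a ≠ 0) :
    ∑ t : F, ψ (a * t ^ 2) = ((quadraticChar F a : ℤ) : ℂ) * ∑ t : F, ψ (t ^ 2) := by
  have hchar : ringChar F ≠ 2 := by
    intro h
    have := FiniteField.even_card_of_char_two h
    simp [Nat.even_iff, Nat.odd_iff] at hodd
    omega
  have hprim : ψ.IsPrimitive := AddChar.IsPrimitive.of_ne_one hψ
  set χ' : MulChar F ℂ := (quadraticChar F).ringHomComp (Int.castRingHom ℂ) with hχ'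
  have hχ'app : ∀ s : F, χ' s = ((quadraticChar F s : ℤ) : ℂ) := fun s => by
    simp [hχ', MulChar.ringHomComp]
  have main : ∀ c : F, c ≠ 0 → ∑ t : F, ψ (c * t ^ 2) = χ' c * gaussSum χ' ψ := by
    intro c hc
    have fib : ∑ t : F, ψ (c * t ^ 2)
        = ∑ s : F, ∑ t ∈ univ.filter (fun t : F => t ^ 2 = s), ψ (c * t ^ 2) := by
      rw [Finset.sum_fiberwise_of_maps_to (fun t _ => Finset.mem_univ (t ^ 2))]
    have step : ∀ s : F, ∑ t ∈ univ.filter (fun t : F => t ^ 2 = s), ψ (c * t ^ 2)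
        = (χ' s + 1) * ψ (c * s) := by
      intro s
      have h3 : ((univ.filter (fun t : F => t ^ 2 = s)).card : ℤ)
          = quadraticChar F s + 1 := by
        have := quadraticChar_card_sqrts hchar s
        rwa [Set.toFinset_setOf] at this
      have hcard : ((univ.filter (fun t : F => t ^ 2 = s)).card : ℂ) = χ' s + 1 := by
        rw [hχ'app s]; exact_mod_cast h3
      calc ∑ t ∈ univ.filter (fun t : F => t ^ 2 = s), ψ (c * t ^ 2)
          = ∑ _t ∈ univ.filter (fun t : F => t ^ 2 = s), ψ (c * s) :=
            Finset.sum_congr rfl (fun t ht => by rw [(Finset.mem_filter.mp ht).2])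
        _ = ((univ.filter (fun t : F => t ^ 2 = s)).card : ℂ) * ψ (c * s) := by
            rw [Finset.sum_const, nsmul_eq_mul]
        _ = (χ' s + 1) * ψ (c * s) := by rw [hcard]
    rw [fib, Finset.sum_congr rfl (fun s _ => step s)]
    have split : ∑ s : F, (χ' s + 1) * ψ (c * s)
        = (∑ s : F, χ' s * ψ (c * s)) + ∑ s : F, ψ (c * s) := by
      rw [← Finset.sum_add_distrib]; congr 1; funext s; ring
    rw [split]
    have h0 : ∑ s : F, ψ (c * s) = 0 := by
      have h := AddChar.sum_mulShift c hprim
      rw [if_neg hc] at h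
      simpa [mul_comm] using h
    rw [h0, add_zero]
    have sub : ∑ s : F, χ' s * ψ (c * s) = ∑ s : F, χ' (c⁻¹ * s) * ψ s := by
      apply Fintype.sum_bijective (fun s => c * s) (mulLeft_bijective₀ c hc)
      intro s
      rw [inv_mul_cancel_left₀ hc]
    rw [sub]
    have : ∀ s : F, χ' (c⁻¹ * s) * ψ s = χ' c * (χ' s * ψ s) := by
      intro s
      rw [map_mul, hχ'app c⁻¹, quadChar_inv c hc, hχ'app c]
      ring
    rw [Finset.sum_congr rfl (fun s _ => this s), ← Finset.mul_sum]
    rfl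
  have h1 : ∑ t : F, ψ (t ^ 2) = gaussSum χ' ψ := by
    have := main 1 one_ne_zero
    simpa using this
  rw [main a ha, h1, hχ'app a]

lemma sum_Icc_eq_range {M : Type*} [AddCommMonoid M] (f : ℕ → M) (a b : ℕ) :
    ∑ i ∈ Finset.Icc a b, f i = ∑ k ∈ Finset.range (b + 1 - a), f (a + k) := by
  apply Finset.sum_bij' (i := fun i _ => i - a) (j := fun k _ => a + k)
  · intro i hi; rw [Finset.mem_Icc] at hi; rw [Finset.mem_range]; omega
  · intro k hk; rw [Finset.mem_range] at hk; rw [Finset.mem_Icc]; omega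
  · intro i hi; rw [Finset.mem_Icc] at hi; omega
  · intro k hk; omega
  · intro i hi; rw [Finset.mem_Icc] at hi; congr 1; omega

/-- Key algebraic simplification of twice the quadratic form. -/
lemma key_inner {F : Type*} [Field F] (n : ℕ) (hn : 2 ≤ n) (X : ℕ → F) :
    (X n - X (2 * n)) * X 1 + (X 1 - X n) * X n
      + (X (n + 2) - X (n + 1)) * X (n + 1) + (X (n + 1) - X (n - 1)) * X (n + 2)
      + (∑ i ∈ Finset.Icc 2 (n - 1), (X (2 * n + 2 - i) - X (2 * n + 1 - i)) * X i)
      + (∑ i ∈ Finset.Icc (n + 3) (2 * n), (X (2 * n + 2 - i) - X (2 * n + 1 - i)) * X i)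
    = 2 * (X 1 * (X n - X (2 * n)))
      + 2 * (∑ k ∈ Finset.range (n - 2), X (k + 2) * (X (2 * n - k) - X (2 * n - 1 - k)))
      + (2 * X (n + 1) * X (n + 2) - X n ^ 2 - X (n + 1) ^ 2) := by
  have e1 : ∑ i ∈ Finset.Icc 2 (n - 1), (X (2 * n + 2 - i) - X (2 * n + 1 - i)) * X i
      = ∑ k ∈ Finset.range (n - 2), (X (2 * n - k) - X (2 * n - 1 - k)) * X (k + 2) := by
    rw [sum_Icc_eq_range]
    apply Finset.sum_congr (by rw [show n - 1 + 1 - 2 = n - 2 from by omega])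
    intro k hk
    rw [Finset.mem_range] at hk
    rw [show 2 * n + 2 - (2 + k) = 2 * n - k from by omega,
      show 2 * n + 1 - (2 + k) = 2 * n - 1 - k from by omega,
      show 2 + k = k + 2 from by omega]
  have e2 : ∑ i ∈ Finset.Icc (n + 3) (2 * n), (X (2 * n + 2 - i) - X (2 * n + 1 - i)) * X i
      = ∑ k ∈ Finset.range (n - 2), (X (n - 1 - k) - X (n - 2 - k)) * X (n + 3 + k) := by
    rw [sum_Icc_eq_range]
    apply Finset.sum_congr (by rw [show 2 * n + 1 - (n + 3) = n - 2 from by omega])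
    intro k hk
    rw [Finset.mem_range] at hk
    rw [show 2 * n + 2 - (n + 3 + k) = n - 1 - k from by omega,
      show 2 * n + 1 - (n + 3 + k) = n - 2 - k from by omega]
  have e3 : ∑ k ∈ Finset.range (n - 2), (X (n - 1 - k) - X (n - 2 - k)) * X (n + 3 + k)
      = ∑ k ∈ Finset.range (n - 2), (X (k + 2) - X (k + 1)) * X (2 * n - k) := by
    rw [← Finset.sum_range_reflect]
    apply Finset.sum_congr rfl
    intro k hk
    rw [Finset.mem_range] at hk
    rw [show n - 1 - (n - 2 - 1 - k) = k + 2 from by omega,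
      show n - 2 - (n - 2 - 1 - k) = k + 1 from by omega,
      show n + 3 + (n - 2 - 1 - k) = 2 * n - k from by omega]
  rw [e1, e2, e3]
  have comb : (∑ k ∈ Finset.range (n - 2), (X (2 * n - k) - X (2 * n - 1 - k)) * X (k + 2))
      + (∑ k ∈ Finset.range (n - 2), (X (k + 2) - X (k + 1)) * X (2 * n - k))
      = 2 * (∑ k ∈ Finset.range (n - 2), X (k + 2) * (X (2 * n - k) - X (2 * n - 1 - k)))
        + (X (n - 2 + 1) * X (2 * n - (n - 2)) - X (0 + 1) * X (2 * n - 0)) := by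
    rw [Finset.mul_sum, ← Finset.sum_add_distrib,
      ← Finset.sum_range_sub (fun k => X (k + 1) * X (2 * n - k)), ← Finset.sum_add_distrib]
    apply Finset.sum_congr rfl
    intro k hk
    rw [Finset.mem_range] at hk
    rw [show 2 * n - (k + 1) = 2 * n - 1 - k from by omega]
    ring
  rw [show n - 2 + 1 = n - 1 from by omega, show 2 * n - (n - 2) = n + 2 from by omega,
    show (0 : ℕ) + 1 = 1 from rfl, show 2 * n - 0 = 2 * n from rfl] at comb
  linear_combination comb

def glue {F : Type*} [Zero F] (n : ℕ) (a : Fin (n - 1) → F) (b : Fin (n + 1) → F) :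
    Fin (2 * n) → F :=
  fun k => if h : (k : ℕ) < n - 1 then a ⟨k, h⟩
    else b ⟨(k : ℕ) - (n - 1), by have := k.isLt; omega⟩

lemma glue_bijective {F : Type*} [Zero F] (n : ℕ) (hn : 1 ≤ n) :
    Function.Bijective (fun p : (Fin (n - 1) → F) × (Fin (n + 1) → F) => glue n p.1 p.2) := by
  rw [Function.bijective_iff_has_inverse]
  refine ⟨fun x => (fun i => x ⟨i, by have := i.isLt; omega⟩,
    fun j => x ⟨(n - 1) + j, by have := j.isLt; omega⟩), ?_, ?_⟩
  · rintro ⟨a, b⟩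
    refine Prod.ext ?_ ?_ <;> simp only <;> funext i
    · have hi : (i : ℕ) < n - 1 := i.isLt
      simp only [glue, dif_pos hi]
    · have : ¬ ((n - 1 + (i : ℕ)) < n - 1) := by omega
      simp only [glue, this, dif_neg, not_false_iff]
      congr 1
      exact Fin.ext (by simp only [Fin.val_mk]; omega)
  · intro x
    funext k
    by_cases h : (k : ℕ) < n - 1
    · simp only [glue, dif_pos h]
    · simp only [glue, dif_neg h]
      congr 1
      exact Fin.ext (by have := k.isLt; simp only [Fin.val_mk]; omega)

def Wf {F : Type*} [Field F] {n : ℕ} (i : Fin (n - 1)) (b : Fin (n + 1) → F) : F :=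
  if h0 : (i : ℕ) = 0 then b ⟨0, n.succ_pos⟩ - b ⟨n, n.lt_succ_self⟩
  else b ⟨n + 1 - (i : ℕ), by have := i.isLt; omega⟩ - b ⟨n - (i : ℕ), by omega⟩

def Cf {F : Type*} [Field F] {n : ℕ} (hn : 2 ≤ n) (b : Fin (n + 1) → F) : F :=
  (2 : F)⁻¹ * (2 * b ⟨1, by omega⟩ * b ⟨2, by omega⟩ - b ⟨0, by omega⟩ ^ 2 - b ⟨1, by omega⟩ ^ 2)

def pat {F : Type*} {n : ℕ} (vw : F × F) : Fin (n + 1) → F :=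
  fun j => if (j : ℕ) = 1 then vw.1 else vw.2

lemma coord_glue_low {F : Type*} [Zero F] {n : ℕ} (hn : 2 ≤ n)
    (a : Fin (n - 1) → F) (b : Fin (n + 1) → F) {i : ℕ} (h1 : 1 ≤ i) (h2 : i ≤ n - 1) :
    coordFn (2 * n) (glue n a b) i = a ⟨i - 1, by omega⟩ := by
  rw [coordFn, dif_pos ⟨h1, by omega⟩, glue, dif_pos (show i - 1 < n - 1 by omega)]

lemma coord_glue_high {F : Type*} [Zero F] {n : ℕ} (hn : 2 ≤ n)
    (a : Fin (n - 1) → F) (b : Fin (n + 1) → F) {i : ℕ} (h1 : n ≤ i) (h2 : i ≤ 2 * n) :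
    coordFn (2 * n) (glue n a b) i = b ⟨i - n, by omega⟩ := by
  rw [coordFn, dif_pos ⟨by omega, h2⟩, glue, dif_neg (show ¬ (i - 1 < n - 1) by omega)]
  exact congrArg b (Fin.ext (by simp only [Fin.val_mk]; omega))

lemma hSO_coords {F : Type*} [Field F] {n : ℕ} (hn : 2 ≤ n) (h2 : (2 : F) ≠ 0)
    (a : Fin (n - 1) → F) (b : Fin (n + 1) → F) :
    hSO n (glue n a b) (glue n a b) = (∑ i : Fin (n - 1), a i * Wf i b) + Cf hn b := by
  have hX1 : coordFn (2 * n) (glue n a b) 1 = a ⟨0, by omega⟩ := by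
    rw [coord_glue_low hn a b le_rfl (by omega)]
  have hXn : coordFn (2 * n) (glue n a b) n = b ⟨0, by omega⟩ := by
    rw [coord_glue_high hn a b le_rfl (by omega)]
    exact congrArg b (Fin.ext (by simp only [Fin.val_mk]; omega))
  have hX2n : coordFn (2 * n) (glue n a b) (2 * n) = b ⟨n, by omega⟩ := by
    rw [coord_glue_high hn a b (by omega) le_rfl]
    exact congrArg b (Fin.ext (by simp only [Fin.val_mk]; omega))
  have hXn1 : coordFn (2 * n) (glue n a b) (n + 1) = b ⟨1, by omega⟩ := by
    rw [coord_glue_high hn a b (by omega) (by omega)]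
    exact congrArg b (Fin.ext (by simp only [Fin.val_mk]; omega))
  have hXn2 : coordFn (2 * n) (glue n a b) (n + 2) = b ⟨2, by omega⟩ := by
    rw [coord_glue_high hn a b (by omega) (by omega)]
    exact congrArg b (Fin.ext (by simp only [Fin.val_mk]; omega))
  set f : ℕ → F := fun k => if h : k < n - 1 then a ⟨k, h⟩ * Wf ⟨k, h⟩ b else 0 with hf
  have conv1 : (∑ i : Fin (n - 1), a i * Wf i b) = ∑ k ∈ Finset.range (n - 1), f k := by
    rw [← Fin.sum_univ_eq_sum_range f]
    apply Finset.sum_congr rfl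
    intro i _
    rw [hf]
    simp only [i.isLt, dif_pos, Fin.eta]
  have conv2 : ∑ k ∈ Finset.range (n - 1), f k
      = f 0 + ∑ k ∈ Finset.range (n - 2), f (k + 1) := by
    rw [show n - 1 = (n - 2) + 1 from by omega, Finset.sum_range_succ']
    ring
  have hf0 : f 0 = a ⟨0, by omega⟩ * (b ⟨0, by omega⟩ - b ⟨n, by omega⟩) := by
    rw [hf]
    simp only [dif_pos (show 0 < n - 1 by omega)]
    rw [Wf, dif_pos rfl]
  have hsum : ∑ k ∈ Finset.range (n - 2),
        coordFn (2 * n) (glue n a b) (k + 2) *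
          (coordFn (2 * n) (glue n a b) (2 * n - k)
            - coordFn (2 * n) (glue n a b) (2 * n - 1 - k))
      = ∑ k ∈ Finset.range (n - 2), f (k + 1) := by
    apply Finset.sum_congr rfl
    intro k hk
    rw [Finset.mem_range] at hk
    rw [coord_glue_low hn a b (by omega) (by omega),
      coord_glue_high hn a b (by omega) (by omega),
      coord_glue_high hn a b (by omega) (by omega), hf]
    simp only [dif_pos (show k + 1 < n - 1 by omega)]
    rw [Wf, dif_neg (show ¬ ((⟨k + 1, by omega⟩ : Fin (n - 1)) : ℕ) = 0 from Nat.succ_ne_zero k)]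
    refine congrArg₂ (· * ·) ?_ (congrArg₂ (· - ·) ?_ ?_) <;>
      exact congrArg _ (Fin.ext (by simp only [Fin.val_mk]; omega))
  simp only [hSO]
  rw [key_inner n hn (coordFn (2 * n) (glue n a b))]
  rw [hX1, hXn, hX2n, hXn1, hXn2, hsum, conv1, conv2, hf0, Cf]
  field_simp

/-- `Σ_{x ∈ 𝔽_q^{2n}} ψ(Q_n(x)) = χ(−2)·qⁿ·G(ψ)`, where
`Q_n(x) = h_n(x,x)` is the form attached to a ramified even special orthogonal group
`SO_{2n}`, `χ` is the quadratic character of `𝔽_q^×` and `G(ψ) = Σ_t ψ(t²)`. -/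
theorem gauss_sum_hSO_eq
    (F : Type) [Field F] [Fintype F] [DecidableEq F]
    (hodd : Odd (Fintype.card F))
    (ψ : AddChar F ℂ) (hψ : ψ ≠ 1)
    (n : ℕ) (hn : 2 ≤ n) :
    ∑ x : Fin (2 * n) → F, ψ (hSO n x x)
      = ((quadraticChar F (-2) : ℤ) : ℂ) * (Fintype.card F : ℂ) ^ n
          * ∑ t : F, ψ (t ^ 2) := by
  classical
  have hchar : ringChar F ≠ 2 := by
    intro h
    have := FiniteField.even_card_of_char_two h
    simp [Nat.even_iff, Nat.odd_iff] at hodd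
    omega
  have h2 : (2 : F) ≠ 0 := Ring.two_ne_zero hchar
  have hprim : ψ.IsPrimitive := AddChar.IsPrimitive.of_ne_one hψ
  -- change of variables
  rw [← Fintype.sum_bijective _ (glue_bijective (F := F) n (by omega))
    (fun p : (Fin (n - 1) → F) × (Fin (n + 1) → F) => ψ (hSO n (glue n p.1 p.2) (glue n p.1 p.2)))
    (fun x => ψ (hSO n x x)) (fun p => rfl)]
  rw [Fintype.sum_prod_type, Finset.sum_comm]
  -- the inner sum over `a`
  have step1 : ∀ b : Fin (n + 1) → F,
      (∑ a : Fin (n - 1) → F, ψ (hSO n (glue n a b) (glue n a b)))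
      = (if ∀ i : Fin (n - 1), Wf i b = 0 then ((Fintype.card F : ℂ)) ^ (n - 1) else 0)
          * ψ (Cf hn b) := by
    intro b
    have e : ∀ a : Fin (n - 1) → F, ψ (hSO n (glue n a b) (glue n a b))
        = (∏ i : Fin (n - 1), ψ (a i * Wf i b)) * ψ (Cf hn b) := by
      intro a
      rw [hSO_coords hn h2 a b, AddChar.map_add_eq_mul, addChar_map_sum]
    rw [Finset.sum_congr rfl (fun a _ => e a), ← Finset.sum_mul]
    congr 1
    rw [← Fintype.prod_sum (fun (i : Fin (n - 1)) (t : F) => ψ (t * Wf i b))]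
    by_cases hall : ∀ i : Fin (n - 1), Wf i b = 0
    · rw [if_pos hall,
        Finset.prod_congr rfl (fun i _ => by rw [AddChar.sum_mulShift _ hprim, if_pos (hall i)])]
      simp [Finset.prod_const, Finset.card_univ]
    · rw [if_neg hall]
      push_neg at hall
      obtain ⟨i0, hi0⟩ := hall
      apply Finset.prod_eq_zero (Finset.mem_univ i0)
      rw [AddChar.sum_mulShift _ hprim, if_neg hi0]
      exact Nat.cast_zero
  rw [Finset.sum_congr rfl (fun b _ => step1 b)]
  -- collapse to the filtered sum
  have step2 : ∑ b : Fin (n + 1) → F,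
      (if ∀ i : Fin (n - 1), Wf i b = 0 then ((Fintype.card F : ℂ)) ^ (n - 1) else 0)
        * ψ (Cf hn b)
      = (Fintype.card F : ℂ) ^ (n - 1) *
          ∑ b ∈ Finset.univ.filter (fun b : Fin (n + 1) → F => ∀ i : Fin (n - 1), Wf i b = 0),
            ψ (Cf hn b) := by
    rw [Finset.mul_sum, Finset.sum_filter]
    apply Finset.sum_congr rfl
    intro b _
    by_cases hP : ∀ i : Fin (n - 1), Wf i b = 0
    · rw [if_pos hP, if_pos hP]
    · rw [if_neg hP, if_neg hP, zero_mul]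
  rw [step2]
  -- identify the filtered sum with a sum over `F × F`
  have chain : ∀ b : Fin (n + 1) → F, (∀ i : Fin (n - 1), Wf i b = 0) →
      ∀ j : Fin (n + 1), (j : ℕ) ≠ 1 → b j = b ⟨0, n.succ_pos⟩ := by
    intro b hP
    have hn0 : b ⟨n, n.lt_succ_self⟩ = b ⟨0, n.succ_pos⟩ := by
      have h := hP ⟨0, by omega⟩
      rw [Wf, dif_pos rfl] at h
      exact (sub_eq_zero.mp h).symm
    have hd : ∀ d, d ≤ n - 2 → b ⟨n - d, by omega⟩ = b ⟨0, n.succ_pos⟩ := by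
      intro d
      induction d with
      | zero => intro _; simpa using hn0
      | succ d ih =>
        intro hdle
        have hWf := hP ⟨d + 1, by omega⟩
        rw [Wf, dif_neg (show ¬ ((⟨d + 1, by omega⟩ : Fin (n - 1)) : ℕ) = 0 from
          Nat.succ_ne_zero d)] at hWf
        simp only [Fin.val_mk] at hWf
        have heq := sub_eq_zero.mp hWf
        have e1 : (⟨n + 1 - (d + 1), by omega⟩ : Fin (n + 1))
            = ⟨n - d, by omega⟩ := Fin.ext (by simp only [Fin.val_mk]; omega)
        rw [e1] at heq
        rw [show (⟨n - (d + 1), by omega⟩ : Fin (n + 1))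
          = ⟨n - (d + 1), by omega⟩ from rfl, ← heq]
        exact ih (by omega)
    intro j hj
    rcases Nat.lt_or_ge (j : ℕ) 2 with hlt | hge
    · have h0 : (j : ℕ) = 0 := by omega
      exact congrArg b (Fin.ext h0)
    · have hj2 : (j : ℕ) ≤ n := by have := j.isLt; omega
      have h := hd (n - (j : ℕ)) (by omega)
      have e : (⟨n - (n - (j : ℕ)), by omega⟩ : Fin (n + 1)) = j :=
        Fin.ext (by simp only [Fin.val_mk]; omega)
      rwa [e] at h
  have hpat_mem : ∀ vw : F × F, ∀ i : Fin (n - 1), Wf i (pat vw) = 0 := by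
    intro vw i
    rw [Wf]
    split_ifs with h0
    · show pat vw _ - pat vw _ = 0
      rw [pat, pat]
      simp only
      rw [if_neg (by norm_num : ¬ ((0:ℕ) = 1)), if_neg (show ¬ (n = 1) from by omega), sub_self]
    · show pat vw _ - pat vw _ = 0
      have hi : 1 ≤ (i : ℕ) ∧ (i : ℕ) < n - 1 := ⟨by omega, i.isLt⟩
      rw [pat, pat]
      simp only
      rw [if_neg (show ¬ (n + 1 - (i:ℕ) = 1) from by omega),
        if_neg (show ¬ (n - (i:ℕ) = 1) from by omega), sub_self]
  have hpat_inv : ∀ b : Fin (n + 1) → F, (∀ i : Fin (n - 1), Wf i b = 0) →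
      pat (b ⟨1, by omega⟩, b ⟨0, by omega⟩) = b := by
    intro b hb
    funext j
    by_cases hj : (j : ℕ) = 1
    · rw [pat]
      simp only [if_pos hj]
      exact (congrArg b (Fin.ext hj)).symm
    · rw [pat]
      simp only [if_neg hj]
      exact (chain b hb j hj).symm
  have step3 : ∑ b ∈ Finset.univ.filter
        (fun b : Fin (n + 1) → F => ∀ i : Fin (n - 1), Wf i b = 0), ψ (Cf hn b)
      = ∑ vw : F × F, ψ (Cf hn (pat vw)) := by
    apply Finset.sum_bij'
      (i := fun b _ => ((b ⟨1, by omega⟩, b ⟨0, by omega⟩) : F × F))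
      (j := fun vw _ => pat vw)
    case hi => intro b _; exact Finset.mem_univ _
    case hj =>
      intro vw _
      rw [Finset.mem_filter]
      exact ⟨Finset.mem_univ _, hpat_mem vw⟩
    case left_neg =>
      intro b hb
      rw [Finset.mem_filter] at hb
      exact hpat_inv b hb.2
    case right_neg =>
      intro vw _
      refine Prod.ext ?_ ?_
      · show (pat vw : Fin (n + 1) → F) ⟨1, by omega⟩ = vw.1
        rw [pat]
        simp
      · show (pat vw : Fin (n + 1) → F) ⟨0, by omega⟩ = vw.2
        rw [pat]
        simp
    case h =>
      intro b hb
      rw [Finset.mem_filter] at hb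
      rw [hpat_inv b hb.2]
  rw [step3]
  -- evaluate the `F × F` sum
  have hC : ∀ vw : F × F, Cf hn (pat vw) = -(2 : F)⁻¹ * (vw.1 - vw.2) ^ 2 := by
    intro vw
    rw [Cf]
    simp only [pat, Fin.val_mk]
    norm_num
    ring
  rw [Finset.sum_congr rfl (fun vw _ => by rw [hC vw])]
  rw [Fintype.sum_prod_type]
  have inner : ∀ v : F, ∑ w : F, ψ (-(2 : F)⁻¹ * (v - w) ^ 2)
      = ∑ t : F, ψ (-(2 : F)⁻¹ * t ^ 2) := by
    intro v
    exact (Fintype.sum_bijective (fun t : F => v - t) (Equiv.subLeft v).bijective _ _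
      (fun t => by rw [sub_sub_cancel])).symm
  rw [Finset.sum_congr rfl (fun v _ => inner v), Finset.sum_const, Finset.card_univ,
    nsmul_eq_mul]
  have step5 : ∑ t : F, ψ (-(2 : F)⁻¹ * t ^ 2)
      = ((quadraticChar F (-2) : ℤ) : ℂ) * ∑ t : F, ψ (t ^ 2) := by
    have ha : (-(2 : F)⁻¹) ≠ 0 := neg_ne_zero.mpr (inv_ne_zero h2)
    have hqc : quadraticChar F (-(2 : F)⁻¹) = quadraticChar F (-2) := by
      rw [← inv_neg]
      exact quadChar_inv (-2 : F) (neg_ne_zero.mpr h2)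
    rw [sum_psi_mul_sq hodd ψ hψ _ ha, hqc]
  rw [step5]
  have hpow : (Fintype.card F : ℂ) ^ (n - 1) * (Fintype.card F : ℂ)
      = (Fintype.card F : ℂ) ^ n := by
    rw [← pow_succ]
    congr 1
    omega
  rw [← hpow]
  ring
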